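/- For |q|<1 and real exponents a, b, the limit as q→1⁻ of the ratio of infinite q-Pochhammer products (x; q^a, q)_∞ / (x; q^b, q)_∞, where (x|c,q)_∞ = ∏_{n=0}^∞ (1 - c q^n x), equals (1-x)^{b-a} for |x|<1. -/

import Mathlib

open Filter Set

/-- The infinite q-Pochhammer-type product `(x | c, q)_∞ = ∏_{n=0}^∞ (1 - c q^n x)`. -/
noncomputable def qPoch (x c q : ℂ) : ℂ := ∏' n : ℕ, (1 - c * q ^ n * x)

lemma aux_tendsto_ratio (e f : ℝ) {n : ℕ} (hn : 0 < n) :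
    Tendsto (fun q : ℝ => (q ^ e - q ^ f) / (1 - q ^ n))
      (nhdsWithin 1 (Set.Ioo (0:ℝ) 1)) (nhds ((f - e) / n)) := by
  have hF : HasDerivAt (fun q : ℝ => q ^ e - q ^ f) (e - f) 1 := by
    have h1 : HasDerivAt (fun q : ℝ => q ^ e) (e * (1:ℝ) ^ (e - 1)) 1 :=
      Real.hasDerivAt_rpow_const (Or.inl one_ne_zero)
    have h2 : HasDerivAt (fun q : ℝ => q ^ f) (f * (1:ℝ) ^ (f - 1)) 1 :=
      Real.hasDerivAt_rpow_const (Or.inl one_ne_zero)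
    have h3 := h1.sub h2
    simp only [Real.one_rpow, mul_one] at h3
    exact h3
  have hG : HasDerivAt (fun q : ℝ => 1 - q ^ n) (-(n:ℝ)) 1 := by
    simpa using (hasDerivAt_pow n (1:ℝ)).const_sub 1
  have hsub : nhdsWithin (1:ℝ) (Set.Ioo 0 1) ≤ nhdsWithin 1 {(1:ℝ)}ᶜ :=
    nhdsWithin_mono _ (fun q hq => ne_of_lt hq.2)
  have hFs := (hasDerivAt_iff_tendsto_slope.mp hF).mono_left hsub
  have hGs := (hasDerivAt_iff_tendsto_slope.mp hG).mono_left hsub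
  have hn' : -(n:ℝ) ≠ 0 := by
    simpa using hn.ne'
  have hdiv := hFs.div hGs hn'
  have hval : (e - f) / (-(n:ℝ)) = (f - e) / n := by
    rw [div_neg, ← neg_div, neg_sub]
  rw [hval] at hdiv
  refine hdiv.congr' ?_
  filter_upwards [self_mem_nhdsWithin] with q hq
  have hq1 : q - 1 ≠ 0 := sub_ne_zero.mpr (ne_of_lt hq.2)
  show slope (fun q : ℝ => q ^ e - q ^ f) 1 q / slope (fun q : ℝ => 1 - q ^ n) 1 q = _
  rw [slope_def_field, slope_def_field]
  simp only [Real.one_rpow, one_pow, sub_self, sub_zero]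
  exact div_div_div_cancel_right₀ hq1 _ _

lemma aux_bound {q : ℝ} (hq0 : 0 < q) (hq1 : q < 1) (a b : ℝ) (k : ℕ) :
    |q ^ ((k:ℝ) * b) - q ^ ((k:ℝ) * a)| ≤
      (q ^ (min a b)) ^ k * ((⌈|a - b|⌉₊ : ℝ) * (1 - q ^ k)) := by
  set u := min a b with hu
  set v := max a b with hv
  have hq1' : q ≤ 1 := hq1.le
  have habs : |q ^ ((k:ℝ) * b) - q ^ ((k:ℝ) * a)| = q ^ ((k:ℝ) * u) - q ^ ((k:ℝ) * v) := by
    rcases le_total a b with h | h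
    · rw [hu, hv, min_eq_left h, max_eq_right h, abs_sub_comm, abs_of_nonneg]
      exact sub_nonneg.mpr (Real.rpow_le_rpow_of_exponent_ge hq0 hq1'
        (mul_le_mul_of_nonneg_left h (Nat.cast_nonneg k)))
    · rw [hu, hv, min_eq_right h, max_eq_left h, abs_of_nonneg]
      exact sub_nonneg.mpr (Real.rpow_le_rpow_of_exponent_ge hq0 hq1'
        (mul_le_mul_of_nonneg_left h (Nat.cast_nonneg k)))
  rw [habs]
  have hfac : q ^ ((k:ℝ) * u) - q ^ ((k:ℝ) * v)
      = q ^ ((k:ℝ) * u) * (1 - q ^ ((k:ℝ) * |a - b|)) := by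
    rw [mul_sub, mul_one, ← Real.rpow_add hq0]
    congr 2
    have hvu : v - u = |a - b| := by
      rcases le_total a b with h | h
      · rw [hu, hv, min_eq_left h, max_eq_right h, abs_sub_comm, abs_of_nonneg (sub_nonneg.mpr h)]
      · rw [hu, hv, min_eq_right h, max_eq_left h, abs_of_nonneg (sub_nonneg.mpr h)]
    rw [← hvu]
    ring
  rw [hfac]
  set m : ℕ := ⌈|a - b|⌉₊ with hm
  have h1 : 1 - q ^ ((k:ℝ) * |a - b|) ≤ (m : ℝ) * (1 - q ^ k) := by
    have hle : q ^ ((k:ℝ) * (m:ℝ)) ≤ q ^ ((k:ℝ) * |a - b|) :=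
      Real.rpow_le_rpow_of_exponent_ge hq0 hq1'
        (mul_le_mul_of_nonneg_left (Nat.le_ceil _) (Nat.cast_nonneg k))
    have heq : q ^ ((k:ℝ) * (m:ℝ)) = (q ^ k) ^ m := by
      rw [← Nat.cast_mul, Real.rpow_natCast, pow_mul]
    have hbern : 1 + (m : ℝ) * (q ^ k - 1) ≤ (q ^ k) ^ m := by
      have := one_add_mul_le_pow (a := q ^ k - 1) (by nlinarith [pow_nonneg hq0.le k]) m
      simpa using this
    have : 1 - (q ^ k) ^ m ≤ (m : ℝ) * (1 - q ^ k) := by nlinarith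
    calc 1 - q ^ ((k:ℝ) * |a - b|) ≤ 1 - q ^ ((k:ℝ) * (m:ℝ)) := by linarith
      _ = 1 - (q ^ k) ^ m := by rw [heq]
      _ ≤ (m : ℝ) * (1 - q ^ k) := this
  have h2 : q ^ ((k:ℝ) * u) = (q ^ u) ^ k := by
    rw [mul_comm, Real.rpow_mul hq0.le, Real.rpow_natCast]
  rw [h2]
  have hpos : (0:ℝ) ≤ (q ^ u) ^ k := pow_nonneg (Real.rpow_nonneg hq0.le u) k
  have hnn : 0 ≤ 1 - q ^ ((k:ℝ) * |a - b|) := by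
    refine sub_nonneg.mpr (Real.rpow_le_one hq0.le hq1' ?_)
    positivity
  exact mul_le_mul_of_nonneg_left h1 hpos

lemma norm_z_eq (e : ℝ) (x : ℂ) {q : ℝ} (hq0 : 0 < q) (n : ℕ) :
    ‖(q:ℂ) ^ (e:ℂ) * (q:ℂ) ^ n * x‖ = (q ^ e * ‖x‖) * q ^ n := by
  rw [← Complex.ofReal_cpow hq0.le e, ← Complex.ofReal_pow]
  simp only [norm_mul, Complex.norm_real, Real.norm_eq_abs]
  rw [abs_of_nonneg (Real.rpow_nonneg hq0.le e), abs_of_nonneg (pow_nonneg hq0.le n)]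
  ring

lemma norm_z_lt_one (e : ℝ) (x : ℂ) {q : ℝ} (hq0 : 0 < q) (hq1 : q < 1)
    (hρ : q ^ e * ‖x‖ < 1) (n : ℕ) :
    ‖(q:ℂ) ^ (e:ℂ) * (q:ℂ) ^ n * x‖ < 1 := by
  rw [norm_z_eq e x hq0 n]
  have h1 : q ^ n ≤ 1 := pow_le_one₀ hq0.le hq1.le
  have h2 : 0 ≤ q ^ e * ‖x‖ := mul_nonneg (Real.rpow_nonneg hq0.le e) (norm_nonneg x)
  calc (q ^ e * ‖x‖) * q ^ n ≤ (q ^ e * ‖x‖) * 1 := by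
        exact mul_le_mul_of_nonneg_left h1 h2
    _ = q ^ e * ‖x‖ := mul_one _
    _ < 1 := hρ

lemma one_sub_z_ne (e : ℝ) (x : ℂ) {q : ℝ} (hq0 : 0 < q) (hq1 : q < 1)
    (hρ : q ^ e * ‖x‖ < 1) (n : ℕ) :
    (1 : ℂ) - (q:ℂ) ^ (e:ℂ) * (q:ℂ) ^ n * x ≠ 0 := by
  intro h
  have := norm_z_lt_one e x hq0 hq1 hρ n
  rw [sub_eq_zero] at h
  rw [← h] at this
  simp at this

lemma summable_log_aux (e : ℝ) (x : ℂ) {q : ℝ} (hq0 : 0 < q) (hq1 : q < 1)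
    (hρ : q ^ e * ‖x‖ < 1) :
    Summable (fun n : ℕ => Complex.log (1 - (q:ℂ) ^ (e:ℂ) * (q:ℂ) ^ n * x)) := by
  set ρ : ℝ := q ^ e * ‖x‖ with hρdef
  have hρ0 : 0 ≤ ρ := mul_nonneg (Real.rpow_nonneg hq0.le e) (norm_nonneg x)
  set C : ℝ := ρ * (1 - ρ)⁻¹ / 2 + 1 with hC
  refine Summable.of_norm_bounded (g := fun n => (C * ρ) * q ^ n)
    (((summable_geometric_of_lt_one hq0.le hq1).mul_left _)) (fun n => ?_)
  set z : ℂ := (q:ℂ) ^ (e:ℂ) * (q:ℂ) ^ n * x with hz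
  have hzn : ‖z‖ = ρ * q ^ n := norm_z_eq e x hq0 n
  have hzρ : ‖z‖ ≤ ρ := by
    rw [hzn]
    exact mul_le_of_le_one_right hρ0 (pow_le_one₀ hq0.le hq1.le)
  have hz1 : ‖z‖ < 1 := lt_of_le_of_lt hzρ hρ
  have h := Complex.norm_log_one_add_le (z := -z) (by simpa using hz1)
  rw [norm_neg] at h
  have h' : ‖Complex.log (1 - z)‖ ≤ ‖z‖ ^ 2 * (1 - ‖z‖)⁻¹ / 2 + ‖z‖ := by
    simpa [sub_eq_add_neg] using h
  have hz0 : 0 ≤ ‖z‖ := norm_nonneg z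
  have hinv : (1 - ‖z‖)⁻¹ ≤ (1 - ρ)⁻¹ := by
    apply inv_anti₀ (by linarith) (by linarith)
  have hbound : ‖z‖ ^ 2 * (1 - ‖z‖)⁻¹ / 2 + ‖z‖ ≤ C * ‖z‖ := by
    have h1 : ‖z‖ ^ 2 * (1 - ‖z‖)⁻¹ ≤ ‖z‖ * (ρ * (1 - ρ)⁻¹) := by
      have hinv0 : 0 ≤ (1 - ‖z‖)⁻¹ := inv_nonneg.mpr (by linarith)
      have hinv0' : 0 ≤ (1 - ρ)⁻¹ := inv_nonneg.mpr (by linarith)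
      calc ‖z‖ ^ 2 * (1 - ‖z‖)⁻¹ = ‖z‖ * (‖z‖ * (1 - ‖z‖)⁻¹) := by ring
        _ ≤ ‖z‖ * (ρ * (1 - ρ)⁻¹) := by
            apply mul_le_mul_of_nonneg_left _ hz0
            exact mul_le_mul hzρ hinv hinv0 hρ0
    rw [hC]; nlinarith
  calc ‖Complex.log (1 - z)‖ ≤ ‖z‖ ^ 2 * (1 - ‖z‖)⁻¹ / 2 + ‖z‖ := h'
    _ ≤ C * ‖z‖ := hbound
    _ = C * ρ * q ^ n := by rw [hzn]; ring

lemma qPoch_eq_cexp (e : ℝ) (x : ℂ) {q : ℝ} (hq0 : 0 < q) (hq1 : q < 1)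
    (hρ : q ^ e * ‖x‖ < 1) :
    qPoch x ((q:ℂ) ^ (e:ℂ)) q
      = Complex.exp (∑' n : ℕ, Complex.log (1 - (q:ℂ) ^ (e:ℂ) * (q:ℂ) ^ n * x)) := by
  have h := Complex.cexp_tsum_eq_tprod
    (f := fun n => 1 - (q:ℂ) ^ (e:ℂ) * (q:ℂ) ^ n * x)
    (fun n => one_sub_z_ne e x hq0 hq1 hρ n)
    (summable_log_aux e x hq0 hq1 hρ)
  exact h.symm

lemma hasSum_slice (a b : ℝ) (x : ℂ) {q : ℝ} (hq0 : 0 < q) (hq1 : q < 1) (k : ℕ) (hk : 0 < k) :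
    HasSum (fun n : ℕ => ((q:ℂ) ^ (b:ℂ) * (q:ℂ) ^ n * x) ^ k / k
        - ((q:ℂ) ^ (a:ℂ) * (q:ℂ) ^ n * x) ^ k / k)
      ((x ^ k / k) * (((q ^ ((k:ℝ) * b) - q ^ ((k:ℝ) * a)) / (1 - q ^ k) : ℝ) : ℂ)) := by
  have hqk : ‖((q:ℂ)) ^ k‖ < 1 := by
    rw [norm_pow, Complex.norm_real, Real.norm_eq_abs, abs_of_pos hq0]
    exact pow_lt_one₀ hq0.le hq1 hk.ne'
  set C : ℂ := ((((q ^ b : ℝ)):ℂ) ^ k - (((q ^ a : ℝ)):ℂ) ^ k) * x ^ k / k with hCdef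
  have hgeo := (hasSum_geometric_of_norm_lt_one hqk).mul_left C
  have hfun : ∀ n : ℕ, C * ((q:ℂ) ^ k) ^ n
      = ((q:ℂ) ^ (b:ℂ) * (q:ℂ) ^ n * x) ^ k / k
        - ((q:ℂ) ^ (a:ℂ) * (q:ℂ) ^ n * x) ^ k / k := by
    intro n
    rw [← Complex.ofReal_cpow hq0.le a, ← Complex.ofReal_cpow hq0.le b, hCdef]
    ring
  have hval : C * (1 - (q:ℂ) ^ k)⁻¹
      = (x ^ k / k) * (((q ^ ((k:ℝ) * b) - q ^ ((k:ℝ) * a)) / (1 - q ^ k) : ℝ) : ℂ) := by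
    rw [hCdef]
    have h1 : (q ^ b) ^ k = q ^ ((k:ℝ) * b) := by
      rw [mul_comm, Real.rpow_mul hq0.le, Real.rpow_natCast]
    have h2 : (q ^ a) ^ k = q ^ ((k:ℝ) * a) := by
      rw [mul_comm, Real.rpow_mul hq0.le, Real.rpow_natCast]
    rw [← h1, ← h2]
    push_cast
    have hqk1 : ((1:ℂ) - (q:ℂ) ^ k) ≠ 0 := by
      intro h
      rw [sub_eq_zero] at h
      rw [← h] at hqk
      simp at hqk
    field_simp
  rw [← hval]
  exact (funext hfun : _ = _) ▸ hgeo

lemma hasSum_slice_all (a b : ℝ) (x : ℂ) {q : ℝ} (hq0 : 0 < q) (hq1 : q < 1) (k : ℕ) :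
    HasSum (fun n : ℕ => ((q:ℂ) ^ (b:ℂ) * (q:ℂ) ^ n * x) ^ k / k
        - ((q:ℂ) ^ (a:ℂ) * (q:ℂ) ^ n * x) ^ k / k)
      ((x ^ k / k) * (((q ^ ((k:ℝ) * b) - q ^ ((k:ℝ) * a)) / (1 - q ^ k) : ℝ) : ℂ)) := by
  rcases Nat.eq_zero_or_pos k with rfl | hk
  · simpa using hasSum_zero
  · exact hasSum_slice a b x hq0 hq1 k hk

lemma qPoch_ratio_eq (a b : ℝ) (x : ℂ) {q : ℝ} (hq0 : 0 < q) (hq1 : q < 1)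
    (hρ : q ^ min (min a b) 0 * ‖x‖ < 1) :
    qPoch x ((q:ℂ) ^ (a:ℂ)) q / qPoch x ((q:ℂ) ^ (b:ℂ)) q
      = Complex.exp (∑' k : ℕ, (x ^ k / k) *
          (((q ^ ((k:ℝ) * b) - q ^ ((k:ℝ) * a)) / (1 - q ^ k) : ℝ) : ℂ)) := by
  have hxnn : (0:ℝ) ≤ ‖x‖ := norm_nonneg x
  have hcle : ∀ e : ℝ, min (min a b) 0 ≤ e → q ^ e * ‖x‖ < 1 := by
    intro e he
    have : q ^ e ≤ q ^ min (min a b) 0 :=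
      Real.rpow_le_rpow_of_exponent_ge hq0 hq1.le he
    calc q ^ e * ‖x‖ ≤ q ^ min (min a b) 0 * ‖x‖ := mul_le_mul_of_nonneg_right this hxnn
      _ < 1 := hρ
  have hρa : q ^ a * ‖x‖ < 1 := hcle a ((min_le_left _ _).trans (min_le_left _ _))
  have hρb : q ^ b * ‖x‖ < 1 := hcle b ((min_le_left _ _).trans (min_le_right _ _))
  set za : ℕ → ℂ := fun n => (q:ℂ) ^ (a:ℂ) * (q:ℂ) ^ n * x with hza
  set zb : ℕ → ℂ := fun n => (q:ℂ) ^ (b:ℂ) * (q:ℂ) ^ n * x with hzb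
  rw [qPoch_eq_cexp a x hq0 hq1 hρa, qPoch_eq_cexp b x hq0 hq1 hρb, ← Complex.exp_sub]
  congr 1
  -- difference of log-sums
  have hsa := summable_log_aux a x hq0 hq1 hρa
  have hsb := summable_log_aux b x hq0 hq1 hρb
  rw [← Summable.tsum_sub hsa hsb]
  -- per-n expansion
  have hA : ∀ n : ℕ, HasSum (fun k : ℕ => zb n ^ k / k - za n ^ k / k)
      (Complex.log (1 - za n) - Complex.log (1 - zb n)) := by
    intro n
    have h1 := Complex.hasSum_taylorSeries_neg_log (norm_z_lt_one b x hq0 hq1 hρb n)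
    have h2 := Complex.hasSum_taylorSeries_neg_log (norm_z_lt_one a x hq0 hq1 hρa n)
    rw [show Complex.log (1 - za n) - Complex.log (1 - zb n)
      = -Complex.log (1 - zb n) - -Complex.log (1 - za n) by ring]
    exact h1.sub h2
  -- uncurried summability
  set ρm : ℝ := max (q ^ a * ‖x‖) (q ^ b * ‖x‖) with hρm
  have hρm0 : 0 ≤ ρm := le_max_of_le_left (mul_nonneg (Real.rpow_nonneg hq0.le a) hxnn)
  have hρm1 : ρm < 1 := max_lt hρa hρb
  have hA'sum : Summable (Function.uncurry fun n k : ℕ => zb n ^ k / k - za n ^ k / k) := by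
    apply Summable.of_norm_bounded (g := fun p : ℕ × ℕ => 2 * (q ^ p.1 * ρm ^ p.2))
    · exact ((Summable.mul_of_nonneg (summable_geometric_of_lt_one hq0.le hq1)
        (summable_geometric_of_lt_one hρm0 hρm1) (fun n => pow_nonneg hq0.le n)
        (fun k => pow_nonneg hρm0 k)).mul_left 2)
    · rintro ⟨n, k⟩
      rcases Nat.eq_zero_or_pos k with rfl | hk
      · simp [Function.uncurry]
        positivity
      · have hzbn : ‖zb n‖ ≤ ρm * q ^ n := by
          rw [hzb]; rw [norm_z_eq b x hq0 n]
          exact mul_le_mul_of_nonneg_right (le_max_right _ _) (pow_nonneg hq0.le n)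
        have hzan : ‖za n‖ ≤ ρm * q ^ n := by
          rw [hza]; rw [norm_z_eq a x hq0 n]
          exact mul_le_mul_of_nonneg_right (le_max_left _ _) (pow_nonneg hq0.le n)
        have hqn1 : q ^ n ≤ 1 := pow_le_one₀ hq0.le hq1.le
        have hkey : ∀ z : ℂ, ‖z‖ ≤ ρm * q ^ n → ‖z ^ k / k‖ ≤ ρm ^ k * q ^ n := by
          intro z hz
          have hk1 : (1:ℝ) ≤ (k:ℝ) := by exact_mod_cast hk
          calc ‖z ^ k / k‖ = ‖z‖ ^ k / (k:ℝ) := by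
                rw [norm_div, norm_pow]; norm_num
            _ ≤ ‖z‖ ^ k := by
                apply div_le_self (pow_nonneg (norm_nonneg z) k) hk1
            _ ≤ (ρm * q ^ n) ^ k := pow_le_pow_left₀ (norm_nonneg z) hz k
            _ = ρm ^ k * (q ^ n) ^ k := mul_pow _ _ _
            _ ≤ ρm ^ k * q ^ n := by
                apply mul_le_mul_of_nonneg_left _ (pow_nonneg hρm0 k)
                calc (q ^ n) ^ k ≤ (q ^ n) ^ 1 :=
                      pow_le_pow_of_le_one (pow_nonneg hq0.le n) hqn1 hk
                  _ = q ^ n := pow_one _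
        calc ‖Function.uncurry (fun n k : ℕ => zb n ^ k / k - za n ^ k / k) (n, k)‖
            ≤ ‖zb n ^ k / k‖ + ‖za n ^ k / k‖ := norm_sub_le _ _
          _ ≤ ρm ^ k * q ^ n + ρm ^ k * q ^ n :=
              add_le_add (hkey _ hzbn) (hkey _ hzan)
          _ = 2 * (q ^ n * ρm ^ k) := by ring
  -- swap the two sums
  have hswap :
      (∑' n : ℕ, ∑' k : ℕ, (zb n ^ k / k - za n ^ k / k))
        = ∑' k : ℕ, ∑' n : ℕ, (zb n ^ k / k - za n ^ k / k) :=
    (Summable.tsum_comm' hA'sum (fun n => (hA n).summable)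
      (fun k => (hasSum_slice_all a b x hq0 hq1 k).summable)).symm
  calc ∑' n : ℕ, (Complex.log (1 - za n) - Complex.log (1 - zb n))
      = ∑' n : ℕ, ∑' k : ℕ, (zb n ^ k / k - za n ^ k / k) :=
        tsum_congr fun n => ((hA n).tsum_eq).symm
    _ = ∑' k : ℕ, ∑' n : ℕ, (zb n ^ k / k - za n ^ k / k) := hswap
    _ = ∑' k : ℕ, (x ^ k / k) *
          (((q ^ ((k:ℝ) * b) - q ^ ((k:ℝ) * a)) / (1 - q ^ k) : ℝ) : ℂ) :=
        tsum_congr fun k => (hasSum_slice_all a b x hq0 hq1 k).tsum_eq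

/-- For real exponents `a, b`, the limit as `q → 1⁻` (along real `q ∈ (0,1)`) of
`(x | q^a, q)_∞ / (x | q^b, q)_∞` equals `(1-x)^(b-a)` for `‖x‖ < 1`. -/
theorem stmt0 (a b : ℝ) (x : ℂ) (hx : ‖x‖ < 1) :
    Filter.Tendsto
      (fun q : ℝ => qPoch x ((q : ℂ) ^ (a : ℂ)) (q : ℂ) / qPoch x ((q : ℂ) ^ (b : ℂ)) (q : ℂ))
      (nhdsWithin 1 (Set.Ioo (0 : ℝ) 1))
      (nhds ((1 - x) ^ ((b : ℂ) - (a : ℂ)))) := by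
  set l := nhdsWithin (1:ℝ) (Set.Ioo (0:ℝ) 1) with hl
  set c : ℝ := min (min a b) 0 with hc
  set ρ : ℝ := (1 + ‖x‖) / 2 with hρdef
  have hxnn : (0:ℝ) ≤ ‖x‖ := norm_nonneg x
  have hρ0 : 0 ≤ ρ := by rw [hρdef]; linarith
  have hρ1 : ρ < 1 := by rw [hρdef]; linarith
  have hxρ : ‖x‖ < ρ := by rw [hρdef]; linarith
  set m : ℝ := (⌈|a - b|⌉₊ : ℝ) with hm
  have hm0 : 0 ≤ m := Nat.cast_nonneg _
  -- the summand
  set f : ℝ → ℕ → ℂ := fun q k => (x ^ k / k) *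
      (((q ^ ((k:ℝ) * b) - q ^ ((k:ℝ) * a)) / (1 - q ^ k) : ℝ) : ℂ) with hf
  -- eventual good set
  have hEv : ∀ᶠ q in l, q ∈ Set.Ioo (0:ℝ) 1 ∧ q ^ c * ‖x‖ < ρ := by
    have h1 : ∀ᶠ q in l, q ∈ Set.Ioo (0:ℝ) 1 := eventually_mem_nhdsWithin
    have h2 : Tendsto (fun q : ℝ => q ^ c * ‖x‖) (nhds 1) (nhds ‖x‖) := by
      have hc1 : Tendsto (fun q : ℝ => q ^ c) (nhds 1) (nhds 1) := by
        have := (Real.continuousAt_rpow_const 1 c (Or.inl one_ne_zero)).tendsto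
        simpa using this
      simpa using hc1.mul_const ‖x‖
    have h3 : ∀ᶠ q in nhds (1:ℝ), q ^ c * ‖x‖ < ρ :=
      h2.eventually_lt_const hxρ
    exact h1.and (h3.filter_mono nhdsWithin_le_nhds)
  -- pointwise limits
  have hpt : ∀ k : ℕ, Tendsto (fun q => f q k) l (nhds ((x ^ k / k) * ((a - b : ℝ) : ℂ))) := by
    intro k
    rcases Nat.eq_zero_or_pos k with rfl | hk
    · simp only [hf, pow_zero, Nat.cast_zero, div_zero, zero_mul]
      exact tendsto_const_nhds
    · have hd := aux_tendsto_ratio ((k:ℝ) * b) ((k:ℝ) * a) hk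
      have hval : ((k:ℝ) * a - (k:ℝ) * b) / (k:ℕ) = a - b := by
        rw [mul_comm (k:ℝ) a, mul_comm (k:ℝ) b, ← sub_mul, mul_comm]
        field_simp
      rw [hval] at hd
      have := ((Complex.continuous_ofReal.tendsto _).comp hd).const_mul (x ^ k / k)
      exact this
  -- dominated bound
  have hbd : ∀ᶠ q in l, ∀ k : ℕ, ‖f q k‖ ≤ m * ρ ^ k := by
    filter_upwards [hEv] with q hq
    obtain ⟨⟨hq0, hq1⟩, hqρ⟩ := hq
    intro k
    rcases Nat.eq_zero_or_pos k with rfl | hk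
    · simp [hf, hm0]
    · have hqk1 : 0 < 1 - q ^ k := by
        have : q ^ k < 1 := pow_lt_one₀ hq0.le hq1 hk.ne'
        linarith
      have hnorm : ‖f q k‖ ≤ ‖x‖ ^ k * (|q ^ ((k:ℝ) * b) - q ^ ((k:ℝ) * a)| / |1 - q ^ k|) := by
        rw [hf]
        simp only [norm_mul, norm_div, norm_pow, Complex.norm_real, Real.norm_eq_abs]
        have hk1 : (1:ℝ) ≤ (k:ℝ) := by exact_mod_cast hk
        have : ‖x‖ ^ k / ‖((k:ℕ):ℂ)‖ ≤ ‖x‖ ^ k := by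
          apply div_le_self (pow_nonneg hxnn k)
          rw [Complex.norm_natCast]; exact hk1
        exact mul_le_mul_of_nonneg_right this
          (div_nonneg (abs_nonneg _) (abs_nonneg _))
      have habs : |q ^ ((k:ℝ) * b) - q ^ ((k:ℝ) * a)| / |1 - q ^ k| ≤ (q ^ c) ^ k * m := by
        rw [abs_of_pos hqk1, div_le_iff₀ hqk1]
        calc |q ^ ((k:ℝ) * b) - q ^ ((k:ℝ) * a)|
            ≤ (q ^ min a b) ^ k * (m * (1 - q ^ k)) := aux_bound hq0 hq1 a b k
          _ ≤ (q ^ c) ^ k * (m * (1 - q ^ k)) := by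
              apply mul_le_mul_of_nonneg_right _ (mul_nonneg hm0 hqk1.le)
              apply pow_le_pow_left₀ (Real.rpow_nonneg hq0.le _)
              exact Real.rpow_le_rpow_of_exponent_ge hq0 hq1.le (min_le_left _ _)
          _ = (q ^ c) ^ k * m * (1 - q ^ k) := by ring
      calc ‖f q k‖ ≤ ‖x‖ ^ k * ((q ^ c) ^ k * m) := by
            exact le_trans hnorm (mul_le_mul_of_nonneg_left habs (pow_nonneg hxnn k))
        _ = (q ^ c * ‖x‖) ^ k * m := by rw [mul_pow]; ring
        _ ≤ ρ ^ k * m := by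
            apply mul_le_mul_of_nonneg_right _ hm0
            apply pow_le_pow_left₀ (mul_nonneg (Real.rpow_nonneg hq0.le _) hxnn)
            exact hqρ.le
        _ = m * ρ ^ k := mul_comm _ _
  -- dominated convergence
  have hsumbd : Summable (fun k : ℕ => m * ρ ^ k) :=
    (summable_geometric_of_lt_one hρ0 hρ1).mul_left m
  have hDCT := tendsto_tsum_of_dominated_convergence hsumbd hpt hbd
  -- value of the limit sum
  have hlog := (Complex.hasSum_taylorSeries_neg_log hx).mul_right ((a - b : ℝ) : ℂ)
  have hsumval : (∑' k : ℕ, (x ^ k / k) * ((a - b : ℝ) : ℂ))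
      = -Complex.log (1 - x) * ((a - b : ℝ) : ℂ) := hlog.tsum_eq
  rw [hsumval] at hDCT
  -- exponentiate
  have hexp := (Complex.continuous_exp.tendsto _).comp hDCT
  have h1x : (1:ℂ) - x ≠ 0 := by
    intro h
    rw [sub_eq_zero] at h
    rw [← h] at hx
    simp at hx
  have hval : Complex.exp (-Complex.log (1 - x) * ((a - b : ℝ) : ℂ))
      = (1 - x) ^ ((b:ℂ) - (a:ℂ)) := by
    rw [Complex.cpow_def_of_ne_zero h1x]
    congr 1
    push_cast
    ring
  rw [hval] at hexp
  refine hexp.congr' ?_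
  filter_upwards [hEv] with q hq
  obtain ⟨⟨hq0, hq1⟩, hqρ⟩ := hq
  have hρ' : q ^ c * ‖x‖ < 1 := hqρ.trans hρ1
  exact (qPoch_ratio_eq a b x hq0 hq1 hρ').symm
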